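/- Let G be a finite simple graph, k a natural number, and v a vertex of G of degree exactly 4 with N(v) = {a, b, c, d} such that the only edges of G among {a, b, c, d} are {a, b}, {b, c} and {c, d} (i.e., the induced subgraph on N(v) is the path a–b–c–d). Let G' be the graph with vertex set V(G) \ {v} whose edge set consists of all edges of G between vertices of V(G) \ {v}, together with all six pairs of distinct vertices from {a, b, c, d} as edges, all edges {x, y} with x ∈ {a, b} and y ∈ N_G(d) \ {v, x}, and all edges {x, y} with x ∈ {c, d} and y ∈ N_G(a) \ {v, x}. Then G has a vertex cover of size at most k if and only if G' has a vertex cover of size at most k. -/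
import Mathlib


/-- `X` is a vertex cover of `G`: every edge has at least one endpoint in `X`. -/
def IsVC {V : Type*} (G : SimpleGraph V) (X : Set V) : Prop :=
  ∀ ⦃u w : V⦄, G.Adj u w → u ∈ X ∨ w ∈ X

/-- `G` has a vertex cover of size at most `k`. -/
def HasVC {V : Type*} (G : SimpleGraph V) (k : ℕ) : Prop :=
  ∃ X : Set V, IsVC G X ∧ X.ncard ≤ k

/-- The graph `G'` on `V(G) \ {v}` whose edges are those of `G` between vertices of
`V(G) \ {v}`, together with all six pairs of distinct vertices from `{a, b, c, d}`,
all edges `{x, y}` with `x ∈ {a, b}` and `y ∈ N_G(d) \ {v, x}`, and all edges `{x, y}`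
with `x ∈ {c, d}` and `y ∈ N_G(a) \ {v, x}`. -/
def ReduceDegFour {V : Type*} (G : SimpleGraph V) (v a b c d : V) :
    SimpleGraph {w : V // w ≠ v} :=
  SimpleGraph.fromRel (fun w w' =>
    G.Adj w.1 w'.1 ∨
    (w.1 ∈ ({a, b, c, d} : Set V) ∧ w'.1 ∈ ({a, b, c, d} : Set V)) ∨
    ((w.1 = a ∨ w.1 = b) ∧ G.Adj d w'.1) ∨
    ((w.1 = c ∨ w.1 = d) ∧ G.Adj a w'.1))

/-- Sufficient conditions for the preimage of a set `Y` to be a vertex cover of the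
reduced graph. -/
lemma fwd_aux {V : Type*} (G : SimpleGraph V) (v a b c d : V) (Y : Set V)
    (hG : ∀ u w : V, G.Adj u w → u ≠ v → w ≠ v → u ∈ Y ∨ w ∈ Y)
    (A1 : a ∈ Y) (A2 : b ∈ Y ∨ c ∈ Y) (A3 : b ∈ Y ∨ d ∈ Y) (A4 : c ∈ Y ∨ d ∈ Y)
    (A5 : b ∈ Y ∨ ∀ y, G.Adj d y → y ≠ v → y ∈ Y)
    (A6 : d ∈ Y ∨ ∀ y, G.Adj a y → y ≠ v → y ∈ Y)
    (A7 : c ∈ Y ∨ ∀ y, G.Adj a y → y ≠ v → y ∈ Y) :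
    IsVC (ReduceDegFour G v a b c d) (Subtype.val ⁻¹' Y) := by
  have key : ∀ u w : {w : V // w ≠ v}, u.1 ≠ w.1 →
      (G.Adj u.1 w.1 ∨
        (u.1 ∈ ({a, b, c, d} : Set V) ∧ w.1 ∈ ({a, b, c, d} : Set V)) ∨
        ((u.1 = a ∨ u.1 = b) ∧ G.Adj d w.1) ∨
        ((u.1 = c ∨ u.1 = d) ∧ G.Adj a w.1)) →
      u.1 ∈ Y ∨ w.1 ∈ Y := by
    rintro u w hne (h | ⟨hu, hw⟩ | ⟨hu, hw⟩ | ⟨hu, hw⟩)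
    · exact hG _ _ h u.2 w.2
    · simp only [Set.mem_insert_iff, Set.mem_singleton_iff] at hu hw
      rcases hu with h1 | h1 | h1 | h1 <;> rcases hw with h2 | h2 | h2 | h2 <;>
        rw [h1, h2] <;>
        first
          | exact absurd (h1.trans h2.symm) hne
          | tauto
    · rcases hu with h1 | h1 <;> rw [h1]
      · exact Or.inl A1
      · rcases A5 with h | h
        · exact Or.inl h
        · exact Or.inr (h _ hw w.2)
    · rcases hu with h1 | h1 <;> rw [h1]
      · rcases A7 with h | h
        · exact Or.inl h
        · exact Or.inr (h _ hw w.2)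
      · rcases A6 with h | h
        · exact Or.inl h
        · exact Or.inr (h _ hw w.2)
  intro u w hadj
  rw [ReduceDegFour, SimpleGraph.fromRel_adj] at hadj
  obtain ⟨hne, h | h⟩ := hadj
  · exact key u w (fun h' => hne (Subtype.ext h')) h
  · exact (key w u (fun h' => hne (Subtype.ext h'.symm)) h).symm

/-- Replacing a vertex `r` by `v` in a "cover away from `v`" gives a vertex cover,
provided all neighbors of `r` other than `v` are in `Y`. -/
lemma back_aux {V : Type*} (G : SimpleGraph V) (v r : V) (Y : Set V)
    (hYcov : ∀ u w : V, G.Adj u w → u ≠ v → w ≠ v → u ∈ Y ∨ w ∈ Y)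
    (hNr : ∀ y, G.Adj r y → y ≠ v → y ∈ Y) :
    IsVC G ((Y \ {r}) ∪ {v}) := by
  intro u w hadj
  by_cases hu : u = v
  · exact Or.inl (Set.mem_union_right _ hu)
  by_cases hw : w = v
  · exact Or.inr (Set.mem_union_right _ hw)
  by_cases hur : u = r
  · refine Or.inr (Set.mem_union_left _ ⟨hNr w (hur ▸ hadj) hw, ?_⟩)
    intro h
    exact hadj.ne (hur.trans (Set.eq_of_mem_singleton h).symm)
  by_cases hwr : w = r
  · exact Or.inl (Set.mem_union_left _ ⟨hNr u (hwr ▸ hadj.symm) hu, hur⟩)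
  · rcases hYcov u w hadj hu hw with h | h
    · exact Or.inl (Set.mem_union_left _ ⟨h, hur⟩)
    · exact Or.inr (Set.mem_union_left _ ⟨h, hwr⟩)

theorem stmt_17 {V : Type*} [Fintype V] (G : SimpleGraph V) (k : ℕ)
    (v a b c d : V)
    (hac : a ≠ c) (had : a ≠ d) (hbd : b ≠ d)
    (hN : G.neighborSet v = {a, b, c, d})
    -- the only edges among {a, b, c, d} are {a, b}, {b, c} and {c, d}
    (hab : G.Adj a b) (hbc : G.Adj b c) (hcd : G.Adj c d)
    (hnac : ¬ G.Adj a c) (hnad : ¬ G.Adj a d) (hnbd : ¬ G.Adj b d) :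
    HasVC G k ↔ HasVC (ReduceDegFour G v a b c d) k := by
  classical
  have hNa : G.Adj v a := by
    have : a ∈ G.neighborSet v := by rw [hN]; simp
    exact this
  have hNb : G.Adj v b := by
    have : b ∈ G.neighborSet v := by rw [hN]; simp
    exact this
  have hNc : G.Adj v c := by
    have : c ∈ G.neighborSet v := by rw [hN]; simp
    exact this
  have hNd : G.Adj v d := by
    have : d ∈ G.neighborSet v := by rw [hN]; simp
    exact this
  have hav : a ≠ v := hNa.ne'
  have hbv : b ≠ v := hNb.ne'
  have hcv : c ≠ v := hNc.ne'
  have hdv : d ≠ v := hNd.ne'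
  constructor
  · rintro ⟨X, hX, hcard⟩
    by_cases hv : v ∈ X
    · -- v is in the cover X; replace it by a suitable vertex among {a,b,c,d}
      have hmem : ∀ z x : V, x ∈ X → x ≠ v → x ∈ insert z (X \ {v}) :=
        fun z x hx hxv => Set.mem_insert_of_mem _ ⟨hx, hxv⟩
      have hG : ∀ z : V, ∀ u w : V, G.Adj u w → u ≠ v → w ≠ v →
          u ∈ insert z (X \ {v}) ∨ w ∈ insert z (X \ {v}) := by
        intro z u w h hu hw
        exact (hX h).imp (fun h' => hmem z u h' hu) (fun h' => hmem z w h' hw)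
      have hcards : ∀ z : V,
          (Subtype.val ⁻¹' (insert z (X \ {v})) : Set {w : V // w ≠ v}).ncard ≤ k := by
        intro z
        have h1 : (Subtype.val ⁻¹' (insert z (X \ {v})) : Set {w : V // w ≠ v}).ncard
            = (Subtype.val '' (Subtype.val ⁻¹' (insert z (X \ {v})) :
                Set {w : V // w ≠ v})).ncard :=
          (Set.ncard_image_of_injective _ Subtype.val_injective).symm
        have h2 : (Subtype.val '' (Subtype.val ⁻¹' (insert z (X \ {v})) :
            Set {w : V // w ≠ v})).ncard ≤ (insert z (X \ {v})).ncard :=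
          Set.ncard_le_ncard (Set.image_preimage_subset _ _) (Set.toFinite _)
        have h3 : (insert z (X \ {v})).ncard ≤ (X \ {v}).ncard + 1 :=
          Set.ncard_insert_le _ _
        have h4 : (X \ {v}).ncard + 1 = X.ncard :=
          Set.ncard_diff_singleton_add_one hv X.toFinite
        omega
      have habX : a ∈ X ∨ b ∈ X := hX hab
      have hbcX : b ∈ X ∨ c ∈ X := hX hbc
      have hcdX : c ∈ X ∨ d ∈ X := hX hcd
      by_cases haX : a ∈ X
      · by_cases hdX : d ∈ X
        · by_cases hbX : b ∈ X
          · -- all of a, b, d in X; add c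
            refine ⟨_, fwd_aux G v a b c d (insert c (X \ {v})) (hG c)
              (hmem c a haX hav) (Or.inl (hmem c b hbX hbv))
              (Or.inl (hmem c b hbX hbv)) (Or.inl (Set.mem_insert _ _))
              (Or.inl (hmem c b hbX hbv)) (Or.inl (hmem c d hdX hdv))
              (Or.inl (Set.mem_insert _ _)), hcards c⟩
          · -- a, d in X, b not; then c ∈ X; add b
            have hcX : c ∈ X := hbcX.resolve_left hbX
            refine ⟨_, fwd_aux G v a b c d (insert b (X \ {v})) (hG b)
              (hmem b a haX hav) (Or.inl (Set.mem_insert _ _))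
              (Or.inl (Set.mem_insert _ _)) (Or.inl (hmem b c hcX hcv))
              (Or.inl (Set.mem_insert _ _)) (Or.inl (hmem b d hdX hdv))
              (Or.inl (hmem b c hcX hcv)), hcards b⟩
        · -- a ∈ X, d ∉ X; then c ∈ X and N(d) ⊆ X; add d
          have hcX : c ∈ X := hcdX.resolve_right hdX
          have hNd' : ∀ y, G.Adj d y → y ≠ v → y ∈ insert d (X \ {v}) :=
            fun y hy hyv => hmem d y ((hX hy).resolve_left hdX) hyv
          refine ⟨_, fwd_aux G v a b c d (insert d (X \ {v})) (hG d)
            (hmem d a haX hav) (Or.inr (hmem d c hcX hcv))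
            (Or.inr (Set.mem_insert _ _)) (Or.inl (hmem d c hcX hcv))
            (Or.inr hNd') (Or.inl (Set.mem_insert _ _))
            (Or.inl (hmem d c hcX hcv)), hcards d⟩
      · -- a ∉ X; then b ∈ X and N(a) ⊆ X; add a
        have hbX : b ∈ X := habX.resolve_left haX
        have hNa' : ∀ y, G.Adj a y → y ≠ v → y ∈ insert a (X \ {v}) :=
          fun y hy hyv => hmem a y ((hX hy).resolve_left haX) hyv
        refine ⟨_, fwd_aux G v a b c d (insert a (X \ {v})) (hG a)
          (Set.mem_insert _ _) (Or.inl (hmem a b hbX hbv))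
          (Or.inl (hmem a b hbX hbv))
          (hcdX.imp (fun h => hmem a c h hcv) (fun h => hmem a d h hdv))
          (Or.inl (hmem a b hbX hbv)) (Or.inr hNa') (Or.inr hNa'), hcards a⟩
    · -- v ∉ X; then a, b, c, d ∈ X and X itself works
      have haX : a ∈ X := (hX hNa).resolve_left hv
      have hbX : b ∈ X := (hX hNb).resolve_left hv
      have hcX : c ∈ X := (hX hNc).resolve_left hv
      have hdX : d ∈ X := (hX hNd).resolve_left hv
      refine ⟨Subtype.val ⁻¹' X, fwd_aux G v a b c d X
        (fun u w h _ _ => hX h) haX (Or.inl hbX) (Or.inl hbX) (Or.inl hcX)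
        (Or.inl hbX) (Or.inl hdX) (Or.inl hcX), ?_⟩
      have h1 : (Subtype.val ⁻¹' X : Set {w : V // w ≠ v}).ncard
          = (Subtype.val '' (Subtype.val ⁻¹' X : Set {w : V // w ≠ v})).ncard :=
        (Set.ncard_image_of_injective _ Subtype.val_injective).symm
      have h2 : (Subtype.val '' (Subtype.val ⁻¹' X : Set {w : V // w ≠ v})).ncard
          ≤ X.ncard := Set.ncard_le_ncard (Set.image_preimage_subset _ _) X.toFinite
      omega
  · rintro ⟨X', hX', hcard⟩
    set Y : Set V := Subtype.val '' X' with hY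
    have hYmem : ∀ (x : V) (hx : x ≠ v), (⟨x, hx⟩ : {w : V // w ≠ v}) ∈ X' → x ∈ Y :=
      fun x hx h => ⟨_, h, rfl⟩
    have hYcard : Y.ncard ≤ k := by
      rw [hY, Set.ncard_image_of_injective _ Subtype.val_injective]; exact hcard
    have hvY : ∀ x ∈ Y, x ≠ v := by
      rintro x ⟨⟨y, hy⟩, _, rfl⟩; exact hy
    have hcov : ∀ u w : V, G.Adj u w → u ≠ v → w ≠ v → u ∈ Y ∨ w ∈ Y := by
      intro u w h hu hw
      have hadj' : (ReduceDegFour G v a b c d).Adj ⟨u, hu⟩ ⟨w, hw⟩ := by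
        rw [ReduceDegFour, SimpleGraph.fromRel_adj]
        exact ⟨fun he => h.ne (congrArg Subtype.val he), Or.inl (Or.inl h)⟩
      exact (hX' hadj').imp (hYmem u hu) (hYmem w hw)
    have hclique : ∀ p q : V, p ∈ ({a, b, c, d} : Set V) → q ∈ ({a, b, c, d} : Set V) →
        p ≠ q → ∀ (hp : p ≠ v) (hq : q ≠ v), p ∈ Y ∨ q ∈ Y := by
      intro p q hp hq hpq hpv hqv
      have hadj' : (ReduceDegFour G v a b c d).Adj ⟨p, hpv⟩ ⟨q, hqv⟩ := by
        rw [ReduceDegFour, SimpleGraph.fromRel_adj]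
        exact ⟨fun he => hpq (congrArg Subtype.val he), Or.inl (Or.inr (Or.inl ⟨hp, hq⟩))⟩
      exact (hX' hadj').imp (hYmem p hpv) (hYmem q hqv)
    have hedge1 : ∀ x : V, (x = a ∨ x = b) → ∀ (hxv : x ≠ v),
        ∀ y, G.Adj d y → ∀ (hyv : y ≠ v), x ≠ y → x ∈ Y ∨ y ∈ Y := by
      intro x hx hxv y hy hyv hxy
      have hadj' : (ReduceDegFour G v a b c d).Adj ⟨x, hxv⟩ ⟨y, hyv⟩ := by
        rw [ReduceDegFour, SimpleGraph.fromRel_adj]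
        exact ⟨fun he => hxy (congrArg Subtype.val he),
          Or.inl (Or.inr (Or.inr (Or.inl ⟨hx, hy⟩)))⟩
      exact (hX' hadj').imp (hYmem x hxv) (hYmem y hyv)
    have hedge2 : ∀ x : V, (x = c ∨ x = d) → ∀ (hxv : x ≠ v),
        ∀ y, G.Adj a y → ∀ (hyv : y ≠ v), x ≠ y → x ∈ Y ∨ y ∈ Y := by
      intro x hx hxv y hy hyv hxy
      have hadj' : (ReduceDegFour G v a b c d).Adj ⟨x, hxv⟩ ⟨y, hyv⟩ := by
        rw [ReduceDegFour, SimpleGraph.fromRel_adj]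
        exact ⟨fun he => hxy (congrArg Subtype.val he),
          Or.inl (Or.inr (Or.inr (Or.inr ⟨hx, hy⟩)))⟩
      exact (hX' hadj').imp (hYmem x hxv) (hYmem y hyv)
    have hremcard : ∀ r ∈ Y, ((Y \ {r}) ∪ {v}).ncard ≤ k := by
      intro r hr
      rw [Set.union_singleton]
      have h1 : (insert v (Y \ {r})).ncard ≤ (Y \ {r}).ncard + 1 :=
        Set.ncard_insert_le _ _
      have h2 : (Y \ {r}).ncard + 1 = Y.ncard :=
        Set.ncard_diff_singleton_add_one hr Y.toFinite
      omega
    have hma : a ∈ ({a, b, c, d} : Set V) := by simp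
    have hmb : b ∈ ({a, b, c, d} : Set V) := by simp
    have hmc : c ∈ ({a, b, c, d} : Set V) := by simp
    have hmd : d ∈ ({a, b, c, d} : Set V) := by simp
    by_cases haY : a ∈ Y
    · by_cases hbY : b ∈ Y
      · by_cases hcY : c ∈ Y
        · by_cases hdY : d ∈ Y
          · -- all four in Y: Y itself is a cover of G
            refine ⟨Y, ?_, hYcard⟩
            intro u w hadj
            by_cases hu : u = v
            · subst hu
              have : w ∈ G.neighborSet u := hadj
              rw [hN] at this
              rcases this with h | h | h | h
              · exact Or.inr (h ▸ haY)
              · exact Or.inr (h ▸ hbY)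
              · exact Or.inr (h ▸ hcY)
              · exact Or.inr (h ▸ hdY)
            by_cases hw : w = v
            · subst hw
              have : u ∈ G.neighborSet w := hadj.symm
              rw [hN] at this
              rcases this with h | h | h | h
              · exact Or.inl (h ▸ haY)
              · exact Or.inl (h ▸ hbY)
              · exact Or.inl (h ▸ hcY)
              · exact Or.inl (h ▸ hdY)
            exact hcov u w hadj hu hw
          · -- d ∉ Y: remove a, add v
            have hNa' : ∀ y, G.Adj a y → y ≠ v → y ∈ Y := by
              intro y hy hyv
              have hdy : d ≠ y := fun h => hnad (by rw [h]; exact hy)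
              exact (hedge2 d (Or.inr rfl) hdv y hy hyv hdy).resolve_left hdY
            exact ⟨_, back_aux G v a Y hcov hNa', hremcard a haY⟩
        · -- c ∉ Y: remove a, add v
          have hNa' : ∀ y, G.Adj a y → y ≠ v → y ∈ Y := by
            intro y hy hyv
            have hcy : c ≠ y := fun h => hnac (by rw [h]; exact hy)
            exact (hedge2 c (Or.inl rfl) hcv y hy hyv hcy).resolve_left hcY
          exact ⟨_, back_aux G v a Y hcov hNa', hremcard a haY⟩
      · -- b ∉ Y: then d ∈ Y; remove d, add v
        have hdY : d ∈ Y := (hclique b d hmb hmd hbd hbv hdv).resolve_left hbY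
        have hNd' : ∀ y, G.Adj d y → y ≠ v → y ∈ Y := by
          intro y hy hyv
          have hby : b ≠ y := fun h => hnbd (by rw [h]; exact hy.symm)
          exact (hedge1 b (Or.inr rfl) hbv y hy hyv hby).resolve_left hbY
        exact ⟨_, back_aux G v d Y hcov hNd', hremcard d hdY⟩
    · -- a ∉ Y: then d ∈ Y; remove d, add v
      have hdY : d ∈ Y := (hclique a d hma hmd had hav hdv).resolve_left haY
      have hNd' : ∀ y, G.Adj d y → y ≠ v → y ∈ Y := by
        intro y hy hyv
        have hay : a ≠ y := fun h => hnad (by rw [h]; exact hy.symm)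
        exact (hedge1 a (Or.inl rfl) hav y hy hyv hay).resolve_left haY
      exact ⟨_, back_aux G v d Y hcov hNd', hremcard d hdY⟩
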